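/- Oxtoby–Ulam theorem for semigroups: if 𝒯 = (T_t)_{t≥0} is a C₀-semigroup on a separable Fréchet space X and x ∈ X is a hypercyclic vector for 𝒯, then there exists a dense G_δ subset J of (0, ∞) such that for every t ∈ J, the vector x is hypercyclic for the single operator T_t. -/

import Mathlib

open Filter

/-- **Oxtoby–Ulam theorem for semigroups.** If `𝒯 = (T_t)_{t≥0}` is a `C₀`-semigroup on a
separable Fréchet space `X` and `x` is a hypercyclic vector for `𝒯`, then there is a dense
`G_δ` subset `J` of `(0, ∞)` such that for every `t ∈ J` the vector `x` is hypercyclic for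
the single operator `T t`. -/
theorem stmt4 {X : Type*} [AddCommGroup X] [Module ℂ X] [Module ℝ X]
    [UniformSpace X] [IsUniformAddGroup X] [ContinuousSMul ℂ X] [ContinuousSMul ℝ X]
    [LocallyConvexSpace ℝ X] [CompleteSpace X]
    [TopologicalSpace.SeparableSpace X] [TopologicalSpace.MetrizableSpace X]
    (T : ℝ → X →L[ℂ] X)
    (hT0 : T 0 = 1)
    (hTadd : ∀ t s : ℝ, 0 ≤ t → 0 ≤ s → T (t + s) = (T t).comp (T s))
    (hTcont : ∀ y : X, ContinuousOn (fun t : ℝ => T t y) (Set.Ici 0))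
    (x : X) (hx : Dense {y : X | ∃ t : ℝ, 0 ≤ t ∧ T t x = y}) :
    ∃ J : Set ℝ, J ⊆ Set.Ioi 0 ∧ IsGδ J ∧ Set.Ioi (0 : ℝ) ⊆ closure J ∧
      ∀ t ∈ J, Dense (Set.range fun n : ℕ => ((T t) ^ n) x) := by
  classical
  haveI : (uniformity X).IsCountablyGenerated := by
    rw [uniformity_eq_comap_nhds_zero X]
    exact Filter.comap.isCountablyGenerated _ _
  haveI : SecondCountableTopology X := UniformSpace.secondCountable_of_separable X
  -- powers of `T t` are given by the semigroup
  have hpow : ∀ t : ℝ, 0 ≤ t → ∀ n : ℕ, (T t) ^ n = T (n * t) := by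
    intro t ht n
    induction n with
    | zero => simp [hT0]
    | succ n ih =>
      rw [pow_succ, ih, ContinuousLinearMap.mul_def,
        ← hTadd ((n : ℝ) * t) t (by positivity) ht]
      congr 1
      push_cast
      ring
  -- each `T t₀` has dense range
  have hdr : ∀ t₀ : ℝ, 0 ≤ t₀ → Dense (Set.range (T t₀)) := by
    intro t₀ ht₀
    by_contra hnd
    simp only [Dense, not_forall] at hnd
    obtain ⟨z, hz⟩ := hnd
    set M : Set X := closure (Set.range (T t₀)) with hM
    have hMclosed : IsClosed M := isClosed_closure
    have hMrange : Set.range (T t₀) ⊆ M := subset_closure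
    -- M is closed under real scalar multiplication
    have hsmul_range : ∀ (c : ℝ) (v : X), v ∈ Set.range (T t₀) → c • v ∈ M := by
      intro c v hv
      have hclosed : IsClosed {c : ℝ | c • v ∈ M} :=
        hMclosed.preimage (continuous_id.smul continuous_const)
      have hq : ∀ q : ℚ, (q : ℝ) ∈ {c : ℝ | c • v ∈ M} := by
        intro q
        obtain ⟨w, rfl⟩ := hv
        have : (q : ℝ) • (T t₀) w = (q : ℂ) • (T t₀) w := ratCast_smul_eq ℝ ℂ q _
        simp only [Set.mem_setOf_eq, this]
        exact hMrange ⟨(q : ℂ) • w, map_smul _ _ _⟩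
      have hsub : closure (Set.range ((↑) : ℚ → ℝ)) ⊆ {c : ℝ | c • v ∈ M} :=
        closure_minimal (Set.range_subset_iff.mpr hq) hclosed
      exact hsub ((Rat.denseRange_cast (𝕜 := ℝ)) c)
    have hsmulM : ∀ (c : ℝ) (v : X), v ∈ M → c • v ∈ M := by
      intro c v hv
      have hclosed : IsClosed {v : X | c • v ∈ M} :=
        hMclosed.preimage (continuous_const_smul c)
      exact closure_minimal (fun w hw => hsmul_range c w hw) hclosed hv
    -- M is closed under addition
    have hadd_range : ∀ a ∈ Set.range (T t₀), ∀ b ∈ M, a + b ∈ M := by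
      intro a ha b hb
      have hclosed : IsClosed {b : X | a + b ∈ M} :=
        hMclosed.preimage (continuous_add_left a)
      refine closure_minimal ?_ hclosed hb
      rintro _ ⟨u, rfl⟩
      obtain ⟨w, rfl⟩ := ha
      exact hMrange ⟨w + u, map_add _ _ _⟩
    have haddM : ∀ a ∈ M, ∀ b ∈ M, a + b ∈ M := by
      intro a ha b hb
      have hclosed : IsClosed {a : X | a + b ∈ M} :=
        hMclosed.preimage (continuous_add_right b)
      exact closure_minimal (fun w hw => hadd_range w hw b hb) hclosed ha
    have hM0 : (0 : X) ∈ M := hMrange ⟨0, map_zero _⟩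
    have hconv : Convex ℝ M := fun a ha b hb p q hp hq hpq =>
      haddM _ (hsmulM p a ha) _ (hsmulM q b hb)
    obtain ⟨f, u, hfz, hfM⟩ := geometric_hahn_banach_point_closed hconv hMclosed hz
    have hu0 : u < 0 := by simpa using hfM 0 hM0
    -- f vanishes on M
    have hfM0 : ∀ v ∈ M, f v = 0 := by
      intro v hv
      by_contra hfv
      have h1 := hfM (((u - 1) / f v) • v) (hsmulM _ _ hv)
      rw [map_smul, smul_eq_mul, div_mul_cancel₀ _ hfv] at h1
      linarith
    -- f is surjective
    have hfz0 : f z ≠ 0 := by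
      intro h
      rw [h] at hfz
      linarith
    have hfsurj : ∀ r : ℝ, ∃ w : X, f w = r := by
      intro r
      refine ⟨(r / f z) • z, ?_⟩
      rw [map_smul, smul_eq_mul, div_mul_cancel₀ _ hfz0]
    -- f ∘ orbit is bounded above
    obtain ⟨c₀, hc₀⟩ : BddAbove ((fun s => f (T s x)) '' Set.Icc 0 t₀) :=
      (isCompact_Icc.image_of_continuousOn
        (f.continuous.comp_continuousOn
          ((hTcont x).mono fun s hs => hs.1))).bddAbove
    set c : ℝ := max c₀ 0 with hc
    have hbound : ∀ s : ℝ, 0 ≤ s → f (T s x) ≤ c := by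
      intro s hs
      rcases le_or_gt s t₀ with h | h
      · exact le_max_of_le_left (hc₀ ⟨s, ⟨hs, h⟩, rfl⟩)
      · have heq : T s x = T t₀ (T (s - t₀) x) := by
          rw [← ContinuousLinearMap.comp_apply, ← hTadd t₀ (s - t₀) ht₀ (by linarith)]
          congr 1
          ring
        rw [heq, hfM0 _ (hMrange ⟨_, rfl⟩)]
        exact le_max_right _ _
    obtain ⟨w, hw⟩ := hfsurj (c + 1)
    have hsub : {y : X | ∃ t : ℝ, 0 ≤ t ∧ T t x = y} ⊆ f ⁻¹' Set.Iic c := by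
      rintro y ⟨t, ht, rfl⟩
      exact hbound t ht
    have huniv : (Set.univ : Set X) ⊆ f ⁻¹' Set.Iic c := by
      rw [← hx.closure_eq]
      exact closure_minimal hsub (isClosed_Iic.preimage f.continuous)
    have := huniv (Set.mem_univ w)
    simp only [Set.mem_preimage, Set.mem_Iic, hw] at this
    linarith
  -- tails of the orbit are dense
  have htail : ∀ t₀ : ℝ, 0 ≤ t₀ → Dense {y : X | ∃ s : ℝ, t₀ ≤ s ∧ T s x = y} := by
    intro t₀ ht₀
    have h1 : Set.range (T t₀) ⊆ closure {y : X | ∃ s : ℝ, t₀ ≤ s ∧ T s x = y} := by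
      rintro _ ⟨w, rfl⟩
      have hw : T t₀ w ∈ T t₀ '' closure {y : X | ∃ t : ℝ, 0 ≤ t ∧ T t x = y} :=
        ⟨w, hx w, rfl⟩
      have h2 := image_closure_subset_closure_image (T t₀).continuous hw
      refine closure_mono ?_ h2
      rintro _ ⟨_, ⟨t, ht, rfl⟩, rfl⟩
      refine ⟨t₀ + t, by linarith, ?_⟩
      rw [hTadd t₀ t ht₀ ht]
      rfl
    rw [dense_iff_closure_eq]
    apply Set.eq_univ_of_univ_subset
    rw [← (hdr t₀ ht₀).closure_eq]
    exact closure_minimal h1 isClosed_closure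
  -- the key density claim on intervals
  have hclaim : ∀ U : Set X, IsOpen U → U.Nonempty → ∀ a b : ℝ, 0 < a → a < b →
      ∃ τ : ℝ, a < τ ∧ τ < b ∧ ∃ n : ℕ, T (n * τ) x ∈ U := by
    intro U hU hUne a b ha hab
    obtain ⟨N, hN⟩ := exists_nat_gt (b / (b - a))
    have hba : (0 : ℝ) < b - a := by linarith
    have hb0 : (0 : ℝ) < b := by linarith
    have hN1 : (1 : ℝ) ≤ N := by
      have : (0 : ℝ) < b / (b - a) := div_pos hb0 hba
      have : (0 : ℝ) < (N : ℝ) := lt_trans this hN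
      exact_mod_cast Nat.one_le_iff_ne_zero.mpr (by exact_mod_cast this.ne')
    obtain ⟨y, ⟨s, hs, rfl⟩, hyU⟩ :=
      (htail ((N : ℝ) * a) (by positivity)).exists_mem_open hU hUne
    have hs0 : 0 < s := lt_of_lt_of_le (by nlinarith) hs
    -- key inequality : s / b + 1 < s / a
    have hkey : s / b + 1 < s / a := by
      rw [div_add' _ _ _ hb0.ne', div_lt_div_iff₀ hb0 ha]
      have h1 : (N : ℝ) * (b - a) > b := by
        rw [gt_iff_lt, ← div_lt_iff₀ hba]
        exact hN
      nlinarith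
    set n : ℕ := ⌊s / b⌋₊ + 1 with hn
    have hn1 : s / b < (n : ℕ) := by
      have := Nat.lt_floor_add_one (s / b)
      rw [hn]
      push_cast
      linarith
    have hn2 : (n : ℝ) ≤ s / b + 1 := by
      rw [hn]
      push_cast
      have := Nat.floor_le (le_of_lt (div_pos hs0 hb0))
      linarith
    have hn3 : (n : ℝ) < s / a := lt_of_le_of_lt hn2 hkey
    have hnpos : (0 : ℝ) < n := lt_of_le_of_lt (div_pos hs0 hb0).le hn1
    refine ⟨s / n, ?_, ?_, n, ?_⟩
    · rw [lt_div_iff₀ hnpos]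
      have : (n : ℝ) * a < s := by
        have := (lt_div_iff₀ ha).mp hn3
        linarith
      linarith
    · rw [div_lt_iff₀ hnpos]
      have : s < (n : ℝ) * b := by
        have := (div_lt_iff₀ hb0).mp hn1
        linarith
      linarith
    · rw [mul_div_cancel₀ _ hnpos.ne']
      exact hyU
  -- assemble everything
  obtain ⟨bas, hbc, hbne, hbB⟩ := TopologicalSpace.exists_countable_basis X
  set D : Set X → Set ℝ := fun U =>
    Set.Iio 0 ∪ ⋃ n : ℕ, (Set.Ioi 0 ∩ (fun τ : ℝ => T (n * τ) x) ⁻¹' U) with hD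
  have hDopen : ∀ U ∈ bas, IsOpen (D U) := by
    intro U hU
    refine isOpen_Iio.union (isOpen_iUnion fun n => ?_)
    have hcont : ContinuousOn (fun τ : ℝ => T (n * τ) x) (Set.Ioi 0) := by
      apply (hTcont x).comp (continuous_const.mul continuous_id).continuousOn
      intro τ hτ
      exact mul_nonneg n.cast_nonneg (le_of_lt (Set.mem_Ioi.mp hτ))
    exact hcont.isOpen_inter_preimage isOpen_Ioi (hbB.isOpen hU)
  have hDdense : ∀ U ∈ bas, Dense (D U) := by
    intro U hU
    have hUne : U.Nonempty := by
      rcases Set.eq_empty_or_nonempty U with h | h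
      · exact absurd (h ▸ hU) hbne
      · exact h
    rw [dense_iff_exists_between]
    intro p q hpq
    rcases lt_or_ge p 0 with hp | hp
    · refine ⟨(p + min q 0) / 2, Or.inl ?_, ?_, ?_⟩
      · have h1 : min q 0 ≤ 0 := min_le_right _ _
        simp only [Set.mem_Iio]
        linarith
      · have : p < min q 0 := lt_min hpq hp
        linarith
      · have h1 : min q 0 ≤ q := min_le_left _ _
        have : p < min q 0 := lt_min hpq hp
        linarith
    · obtain ⟨τ, hτ1, hτ2, n, hn⟩ :=
        hclaim U (hbB.isOpen hU) hUne ((p + q) / 2) q (by linarith) (by linarith)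
      refine ⟨τ, Or.inr ?_, by linarith, hτ2⟩
      exact Set.mem_iUnion.mpr ⟨n, ⟨by simp only [Set.mem_Ioi]; linarith, hn⟩⟩
  refine ⟨Set.Ioi 0 ∩ ⋂ U ∈ bas, D U, Set.inter_subset_left, ?_, ?_, ?_⟩
  · exact isOpen_Ioi.isGδ.inter (IsGδ.biInter hbc fun U hU => (hDopen U hU).isGδ)
  · have hG : Dense (⋂ U ∈ bas, D U) := dense_biInter_of_isOpen hDopen hbc hDdense
    intro t ht
    rw [mem_closure_iff]
    intro V hV htV
    obtain ⟨w, hwG, hwV, hw0⟩ :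
        ∃ w, w ∈ ⋂ U ∈ bas, D U ∧ w ∈ V ∧ w ∈ Set.Ioi 0 := by
      obtain ⟨w, h1, h2⟩ := hG.exists_mem_open (hV.inter isOpen_Ioi) ⟨t, htV, ht⟩
      exact ⟨w, h1, h2.1, h2.2⟩
    exact ⟨w, hwV, hw0, hwG⟩
  · rintro t ⟨ht, htG⟩
    rw [hbB.dense_iff]
    intro U hU hUne
    have htD : t ∈ D U := Set.mem_iInter₂.mp htG U hU
    rcases htD with hlt | hmem
    · exact absurd ht (by simpa using le_of_lt hlt)
    · obtain ⟨n, hn⟩ := Set.mem_iUnion.mp hmem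
      refine ⟨((T t) ^ n) x, ?_, Set.mem_range_self n⟩
      rw [hpow t (le_of_lt ht) n]
      exact hn.2
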